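/- If there exists an alternating walk with respect to a set S ⊆ E, then S is not keepable, i.e., there are no prices p : V → [0,1] with S = {uv ∈ E : p(u)+p(v) ≤ 1}. -/

import Mathlib

def Keepable {V : Type*} (G : SimpleGraph V) (S : Set (Sym2 V)) : Prop :=
  ∃ p : V → ℝ, (∀ v, 0 ≤ p v ∧ p v ≤ 1) ∧
    ∀ u v, G.Adj u v → (s(u, v) ∈ S ↔ p u + p v ≤ 1)

/-- An alternating walk w.r.t. `S`: a closed walk of even positive length whose
    `i`-th edge belongs to `S` iff `i` is odd. -/
def HasAltWalk {V : Type*} (G : SimpleGraph V) (S : Set (Sym2 V)) : Prop :=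
  ∃ (ℓ : ℕ) (w : ℕ → V), 0 < ℓ ∧ Even ℓ ∧ w ℓ = w 0 ∧
    ∀ i < ℓ, G.Adj (w i) (w (i + 1)) ∧ (s(w i, w (i + 1)) ∈ S ↔ Odd i)

/-- If there is an alternating walk with respect to `S`, then `S` is not keepable. -/
theorem not_keepable_of_altWalk {V : Type*} [Fintype V]
    (G : SimpleGraph V) (S : Set (Sym2 V)) (hS : S ⊆ G.edgeSet)
    (h : HasAltWalk G S) : ¬Keepable G S := by
  rintro ⟨p, _hp, hiff⟩
  obtain ⟨ℓ, w, hpos, ⟨m, hm⟩, hclose, hstep⟩ := h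
  -- key step: p (w (i+2)) < p (w i) for even i with i+2 ≤ ℓ
  have key : ∀ k : ℕ, 2 * k + 2 ≤ ℓ → p (w (2 * k + 2)) < p (w (2 * k)) := by
    intro k hk
    have h1 := hstep (2 * k) (by omega)
    have h2 := hstep (2 * k + 1) (by omega)
    have hne : ¬ Odd (2 * k) := by simp [Nat.not_odd_iff_even, Nat.even_mul]
    have hA : ¬ (p (w (2 * k)) + p (w (2 * k + 1)) ≤ 1) := by
      intro hle
      exact hne (h1.2.mp ((hiff _ _ h1.1).mpr hle))
    have hB : p (w (2 * k + 1)) + p (w (2 * k + 1 + 1)) ≤ 1 := by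
      exact (hiff _ _ h2.1).mp (h2.2.mpr ⟨k, by ring⟩)
    push_neg at hA
    have : (2 * k + 1 + 1) = 2 * k + 2 := by ring
    rw [this] at hB
    linarith
  have main : ∀ k : ℕ, 2 * (k + 1) ≤ ℓ → p (w (2 * (k + 1))) < p (w 0) := by
    intro k
    induction k with
    | zero => intro hk; simpa using key 0 (by omega)
    | succ n ih =>
      intro hk
      have h1 := key (n + 1) (by omega)
      have h2 := ih (by omega)
      calc p (w (2 * (n + 1 + 1))) = p (w (2 * (n+1) + 2)) := by ring_nf
        _ < p (w (2 * (n + 1))) := h1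
        _ < p (w 0) := h2
  have hm1 : 1 ≤ m := by omega
  have := main (m - 1) (by omega)
  have hℓ : 2 * (m - 1 + 1) = ℓ := by omega
  rw [hℓ, hclose] at this
  exact lt_irrefl _ this
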